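/- Suppose $\mu, \lambda, \rho, p$ satisfy the evolution equations $e^{-2\mu}(2t\dot\lambda + 1) + K - \Lambda t^2 = 8\pi t^2 \rho$ and $e^{-2\mu}(2t\dot\mu - 1) - K + \Lambda t^2 = 8\pi t^2 p$ for $t \ge t_0 > 0$, where $K \in \{-1,0,1\}$ and $\Lambda > 0$. Differentiating in $r$ yields $\dot\lambda' = [4\pi t^2 \rho' + \mu'(8\pi t^2 \rho - K + \Lambda t^2)] e^{2\mu} t^{-1}$ and $\dot\mu' = [4\pi t^2 p' + \mu'(8\pi t^2 p + K - \Lambda t^2)] e^{2\mu} t^{-1}$. Consequently, if $e^{2\mu} \le A t^{-2}$, $|\mu'| \le A t^{-3}$, $\rho \le A t^{-3}$, $|\rho'| \le A t^{-3}$, $p \le A t^{-5}$, $|p'| \le A t^{-5}$, then $|\dot\lambda'(t)| \le C t^{-4}$ and $|\dot\mu'(t)| \le C t^{-4}$ for a constant $C$ depending only on $A$, $\Lambda$; and integrating, $|\lambda'(t)| \le |\lambda'(t_0)| + \frac{C}{3} t_0^{-3}$ is bounded uniformly for $t \ge t_0$. -/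

import Mathlib

set_option maxHeartbeats 1000000


/-- Lemma 4.2 of the paper: from the evolution equations
`e^{-2μ}(2tλ̇+1) + K - Λt² = 8πt²ρ` and `e^{-2μ}(2tμ̇-1) - K + Λt² = 8πt²p`,
differentiating in `r` yields explicit formulas for `λ̇'` and `μ̇'`; the decay
assumptions then give `|λ̇'| ≤ C t⁻⁴`, `|μ̇'| ≤ C t⁻⁴`, and upon time
integration `|λ'(t)| ≤ |λ'(t₀)| + (C/3) t₀⁻³`. -/
theorem stmt_11 (t₀ Λ A : ℝ) (K : ℤ) (hK : K = -1 ∨ K = 0 ∨ K = 1)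
    (ht₀ : 0 < t₀) (hΛ : 0 < Λ) (hA : 0 < A)
    (μ lam ρ p : ℝ → ℝ → ℝ)                -- functions of (t, r)
    (lamt μt : ℝ → ℝ → ℝ)                  -- time derivatives λ̇, μ̇
    (μr lamr ρr pr : ℝ → ℝ → ℝ)            -- r-derivatives μ', λ', ρ', p'
    (lamtr μtr : ℝ → ℝ → ℝ)                -- mixed derivatives λ̇', μ̇'
    (heq1 : ∀ t r, t₀ ≤ t →
      Real.exp (-2 * μ t r) * (2 * t * lamt t r + 1) + K - Λ * t ^ 2 =
        8 * Real.pi * t ^ 2 * ρ t r)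
    (heq2 : ∀ t r, t₀ ≤ t →
      Real.exp (-2 * μ t r) * (2 * t * μt t r - 1) - K + Λ * t ^ 2 =
        8 * Real.pi * t ^ 2 * p t r)
    (hdμr : ∀ t r, t₀ ≤ t → HasDerivAt (fun x => μ t x) (μr t r) r)
    (hdρr : ∀ t r, t₀ ≤ t → HasDerivAt (fun x => ρ t x) (ρr t r) r)
    (hdpr : ∀ t r, t₀ ≤ t → HasDerivAt (fun x => p t x) (pr t r) r)
    (hdlamtr : ∀ t r, t₀ ≤ t → HasDerivAt (fun x => lamt t x) (lamtr t r) r)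
    (hdμtr : ∀ t r, t₀ ≤ t → HasDerivAt (fun x => μt t x) (μtr t r) r)
    (hdlamrt : ∀ t r, t₀ ≤ t → HasDerivAt (fun s => lamr s r) (lamtr t r) t)
    (hbμ : ∀ t r, t₀ ≤ t → Real.exp (2 * μ t r) ≤ A / t ^ 2)
    (hbμr : ∀ t r, t₀ ≤ t → |μr t r| ≤ A / t ^ 3)
    (hbρ : ∀ t r, t₀ ≤ t → ρ t r ≤ A / t ^ 3)
    (hbρ0 : ∀ t r, t₀ ≤ t → 0 ≤ ρ t r)
    (hbρr : ∀ t r, t₀ ≤ t → |ρr t r| ≤ A / t ^ 3)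
    (hbp : ∀ t r, t₀ ≤ t → p t r ≤ A / t ^ 5)
    (hbp0 : ∀ t r, t₀ ≤ t → 0 ≤ p t r)
    (hbpr : ∀ t r, t₀ ≤ t → |pr t r| ≤ A / t ^ 5) :
    (∀ t r, t₀ ≤ t →
      lamtr t r = (4 * Real.pi * t ^ 2 * ρr t r +
          μr t r * (8 * Real.pi * t ^ 2 * ρ t r - K + Λ * t ^ 2)) *
            Real.exp (2 * μ t r) / t ∧
      μtr t r = (4 * Real.pi * t ^ 2 * pr t r +
          μr t r * (8 * Real.pi * t ^ 2 * p t r + K - Λ * t ^ 2)) *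
            Real.exp (2 * μ t r) / t) ∧
    ∃ C : ℝ, 0 < C ∧
      (∀ t r, t₀ ≤ t → |lamtr t r| ≤ C / t ^ 4 ∧ |μtr t r| ≤ C / t ^ 4) ∧
      (∀ t r, t₀ ≤ t → |lamr t r| ≤ |lamr t₀ r| + C / 3 / t₀ ^ 3) := by
  have hπ : (0:ℝ) < Real.pi := Real.pi_pos
  have hK1 : |(K:ℝ)| ≤ 1 := by
    rcases hK with h | h | h <;> simp [h]
  -- Part 1: the formulas
  have hform : ∀ t r, t₀ ≤ t →
      lamtr t r = (4 * Real.pi * t ^ 2 * ρr t r +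
          μr t r * (8 * Real.pi * t ^ 2 * ρ t r - K + Λ * t ^ 2)) *
            Real.exp (2 * μ t r) / t ∧
      μtr t r = (4 * Real.pi * t ^ 2 * pr t r +
          μr t r * (8 * Real.pi * t ^ 2 * p t r + K - Λ * t ^ 2)) *
            Real.exp (2 * μ t r) / t := by
    intro t r ht
    have ht0 : (0:ℝ) < t := lt_of_lt_of_le ht₀ ht
    have htne : t ≠ 0 := ne_of_gt ht0
    have hexp : HasDerivAt (fun x => Real.exp (-2 * μ t x))
        (Real.exp (-2 * μ t r) * (-2 * μr t r)) r :=
      ((hdμr t r ht).const_mul (-2)).exp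
    have e1 : Real.exp (-2 * μ t r) * Real.exp (2 * μ t r) = 1 := by
      rw [← Real.exp_add, show (-2 * μ t r + 2 * μ t r) = 0 by ring, Real.exp_zero]
    constructor
    · have hin : HasDerivAt (fun x => 2 * t * lamt t x + 1) (2 * t * lamtr t r) r := by
        simpa using ((hdlamtr t r ht).const_mul (2 * t)).add_const 1
      have hL : HasDerivAt
          (fun x => Real.exp (-2 * μ t x) * (2 * t * lamt t x + 1) + (K:ℝ) - Λ * t ^ 2)
          (Real.exp (-2 * μ t r) * (-2 * μr t r) * (2 * t * lamt t r + 1) +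
            Real.exp (-2 * μ t r) * (2 * t * lamtr t r)) r := by
        simpa using ((hexp.mul hin).add_const (K:ℝ)).sub_const (Λ * t ^ 2)
      have hR : HasDerivAt (fun x => 8 * Real.pi * t ^ 2 * ρ t x)
          (8 * Real.pi * t ^ 2 * ρr t r) r := (hdρr t r ht).const_mul _
      have hfun : (fun x => Real.exp (-2 * μ t x) * (2 * t * lamt t x + 1) + (K:ℝ) - Λ * t ^ 2)
          = fun x => 8 * Real.pi * t ^ 2 * ρ t x := funext fun x => heq1 t x ht
      rw [hfun] at hL
      have key := hL.unique hR
      have h1 := heq1 t r ht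
      field_simp
      linear_combination (Real.exp (2 * μ t r) / 2) * key + (Real.exp (2 * μ t r) * μr t r) * h1
        + (- t * lamtr t r) * e1
    · have hin : HasDerivAt (fun x => 2 * t * μt t x - 1) (2 * t * μtr t r) r := by
        simpa using ((hdμtr t r ht).const_mul (2 * t)).sub_const 1
      have hL : HasDerivAt
          (fun x => Real.exp (-2 * μ t x) * (2 * t * μt t x - 1) - (K:ℝ) + Λ * t ^ 2)
          (Real.exp (-2 * μ t r) * (-2 * μr t r) * (2 * t * μt t r - 1) +
            Real.exp (-2 * μ t r) * (2 * t * μtr t r)) r := by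
        simpa using ((hexp.mul hin).sub_const (K:ℝ)).add_const (Λ * t ^ 2)
      have hR : HasDerivAt (fun x => 8 * Real.pi * t ^ 2 * p t x)
          (8 * Real.pi * t ^ 2 * pr t r) r := (hdpr t r ht).const_mul _
      have hfun : (fun x => Real.exp (-2 * μ t x) * (2 * t * μt t x - 1) - (K:ℝ) + Λ * t ^ 2)
          = fun x => 8 * Real.pi * t ^ 2 * p t x := funext fun x => heq2 t x ht
      rw [hfun] at hL
      have key := hL.unique hR
      have h2 := heq2 t r ht
      field_simp
      linear_combination (Real.exp (2 * μ t r) / 2) * key + (Real.exp (2 * μ t r) * μr t r) * h2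
        + (- t * μtr t r) * e1
  refine ⟨hform, ?_⟩
  -- the constant
  set C : ℝ := A * (4 * Real.pi * A + 4 * Real.pi * A / t₀ ^ 2 + 8 * Real.pi * A ^ 2 / t₀ ^ 3
      + 8 * Real.pi * A ^ 2 / t₀ ^ 5 + A / t₀ ^ 2 + Λ * A) with hCdef
  have hC0 : 0 < C := by positivity
  have hbound : ∀ t r, t₀ ≤ t → |lamtr t r| ≤ C / t ^ 4 ∧ |μtr t r| ≤ C / t ^ 4 := by
    intro t r ht
    have ht0 : (0:ℝ) < t := lt_of_lt_of_le ht₀ ht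
    have hexp0 : (0:ℝ) < Real.exp (2 * μ t r) := Real.exp_pos _
    have ha : Real.exp (2 * μ t r) ≤ A / t ^ 2 := hbμ t r ht
    have hμr := hbμr t r ht
    have hμr0 : (0:ℝ) ≤ |μr t r| := abs_nonneg _
    -- arithmetic comparisons t₀ ≤ t
    have c2 : A / t ^ 2 ≤ A / t₀ ^ 2 := by gcongr
    have c3 : 8 * Real.pi * A ^ 2 / t ^ 3 ≤ 8 * Real.pi * A ^ 2 / t₀ ^ 3 := by gcongr
    have c5 : 8 * Real.pi * A ^ 2 / t ^ 5 ≤ 8 * Real.pi * A ^ 2 / t₀ ^ 5 := by gcongr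
    have c2' : 4 * Real.pi * A / t ^ 2 ≤ 4 * Real.pi * A / t₀ ^ 2 := by gcongr
    constructor
    · rw [(hform t r ht).1]
      have hE : |4 * Real.pi * t ^ 2 * ρr t r +
          μr t r * (8 * Real.pi * t ^ 2 * ρ t r - K + Λ * t ^ 2)| ≤
          4 * Real.pi * A / t + A / t ^ 3 * (8 * Real.pi * A / t + 1 + Λ * t ^ 2) := by
        calc |4 * Real.pi * t ^ 2 * ρr t r +
              μr t r * (8 * Real.pi * t ^ 2 * ρ t r - K + Λ * t ^ 2)|
            ≤ |4 * Real.pi * t ^ 2 * ρr t r| +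
              |μr t r| * |8 * Real.pi * t ^ 2 * ρ t r - K + Λ * t ^ 2| := by
              rw [← abs_mul]; exact abs_add_le _ _
          _ ≤ 4 * Real.pi * t ^ 2 * (A / t ^ 3) +
              A / t ^ 3 * (8 * Real.pi * t ^ 2 * (A / t ^ 3) + 1 + Λ * t ^ 2) := by
              have h1 : |4 * Real.pi * t ^ 2 * ρr t r| = 4 * Real.pi * t ^ 2 * |ρr t r| := by
                rw [abs_mul, abs_of_nonneg (by positivity : (0:ℝ) ≤ 4 * Real.pi * t ^ 2)]
              have h2 : |8 * Real.pi * t ^ 2 * ρ t r - K + Λ * t ^ 2| ≤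
                  8 * Real.pi * t ^ 2 * (A / t ^ 3) + 1 + Λ * t ^ 2 := by
                have hρ0 := hbρ0 t r ht
                have hρ := hbρ t r ht
                have hKabs := abs_le.mp hK1
                rw [abs_le]
                constructor <;> nlinarith [sq_nonneg t, mul_pos hπ (mul_pos ht0 ht0)]
              apply add_le_add
              · rw [h1]
                gcongr
                exact hbρr t r ht
              · exact mul_le_mul hμr h2 (abs_nonneg _) (by positivity)
          _ = 4 * Real.pi * A / t + A / t ^ 3 * (8 * Real.pi * A / t + 1 + Λ * t ^ 2) := by
              field_simp
      calc |(4 * Real.pi * t ^ 2 * ρr t r +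
            μr t r * (8 * Real.pi * t ^ 2 * ρ t r - K + Λ * t ^ 2)) *
              Real.exp (2 * μ t r) / t|
          = |4 * Real.pi * t ^ 2 * ρr t r +
            μr t r * (8 * Real.pi * t ^ 2 * ρ t r - K + Λ * t ^ 2)| *
              Real.exp (2 * μ t r) / t := by
            rw [abs_div, abs_mul, abs_of_pos hexp0, abs_of_pos ht0]
        _ ≤ (4 * Real.pi * A / t + A / t ^ 3 * (8 * Real.pi * A / t + 1 + Λ * t ^ 2)) *
              (A / t ^ 2) / t := by gcongr
        _ = (4 * Real.pi * A + 8 * Real.pi * A ^ 2 / t ^ 3 + A / t ^ 2 + Λ * A) * A / t ^ 4 := by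
            field_simp; ring
        _ ≤ C / t ^ 4 := by
            gcongr ?_ / t ^ 4
            have hS : 4 * Real.pi * A + 8 * Real.pi * A ^ 2 / t ^ 3 + A / t ^ 2 + Λ * A ≤
                4 * Real.pi * A + 4 * Real.pi * A / t₀ ^ 2 + 8 * Real.pi * A ^ 2 / t₀ ^ 3
                  + 8 * Real.pi * A ^ 2 / t₀ ^ 5 + A / t₀ ^ 2 + Λ * A := by
              have e1 : (0:ℝ) ≤ 4 * Real.pi * A / t₀ ^ 2 := by positivity
              have e2 : (0:ℝ) ≤ 8 * Real.pi * A ^ 2 / t₀ ^ 5 := by positivity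
              linarith [c2, c3]
            calc (4 * Real.pi * A + 8 * Real.pi * A ^ 2 / t ^ 3 + A / t ^ 2 + Λ * A) * A
                ≤ (4 * Real.pi * A + 4 * Real.pi * A / t₀ ^ 2 + 8 * Real.pi * A ^ 2 / t₀ ^ 3
                  + 8 * Real.pi * A ^ 2 / t₀ ^ 5 + A / t₀ ^ 2 + Λ * A) * A := by
                  exact mul_le_mul_of_nonneg_right hS hA.le
              _ = C := by rw [hCdef]; ring
    · rw [(hform t r ht).2]
      have hE : |4 * Real.pi * t ^ 2 * pr t r +
          μr t r * (8 * Real.pi * t ^ 2 * p t r + K - Λ * t ^ 2)| ≤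
          4 * Real.pi * A / t ^ 3 + A / t ^ 3 * (8 * Real.pi * A / t ^ 3 + 1 + Λ * t ^ 2) := by
        calc |4 * Real.pi * t ^ 2 * pr t r +
              μr t r * (8 * Real.pi * t ^ 2 * p t r + K - Λ * t ^ 2)|
            ≤ |4 * Real.pi * t ^ 2 * pr t r| +
              |μr t r| * |8 * Real.pi * t ^ 2 * p t r + K - Λ * t ^ 2| := by
              rw [← abs_mul]; exact abs_add_le _ _
          _ ≤ 4 * Real.pi * t ^ 2 * (A / t ^ 5) +
              A / t ^ 3 * (8 * Real.pi * t ^ 2 * (A / t ^ 5) + 1 + Λ * t ^ 2) := by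
              have h1 : |4 * Real.pi * t ^ 2 * pr t r| = 4 * Real.pi * t ^ 2 * |pr t r| := by
                rw [abs_mul, abs_of_nonneg (by positivity : (0:ℝ) ≤ 4 * Real.pi * t ^ 2)]
              have h2 : |8 * Real.pi * t ^ 2 * p t r + K - Λ * t ^ 2| ≤
                  8 * Real.pi * t ^ 2 * (A / t ^ 5) + 1 + Λ * t ^ 2 := by
                have hp0 := hbp0 t r ht
                have hp := hbp t r ht
                have hKabs := abs_le.mp hK1
                rw [abs_le]
                constructor <;> nlinarith [sq_nonneg t, mul_pos hπ (mul_pos ht0 ht0)]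
              apply add_le_add
              · rw [h1]
                gcongr
                exact hbpr t r ht
              · exact mul_le_mul hμr h2 (abs_nonneg _) (by positivity)
          _ = 4 * Real.pi * A / t ^ 3 + A / t ^ 3 * (8 * Real.pi * A / t ^ 3 + 1 + Λ * t ^ 2) := by
              field_simp
      calc |(4 * Real.pi * t ^ 2 * pr t r +
            μr t r * (8 * Real.pi * t ^ 2 * p t r + K - Λ * t ^ 2)) *
              Real.exp (2 * μ t r) / t|
          = |4 * Real.pi * t ^ 2 * pr t r +
            μr t r * (8 * Real.pi * t ^ 2 * p t r + K - Λ * t ^ 2)| *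
              Real.exp (2 * μ t r) / t := by
            rw [abs_div, abs_mul, abs_of_pos hexp0, abs_of_pos ht0]
        _ ≤ (4 * Real.pi * A / t ^ 3 + A / t ^ 3 * (8 * Real.pi * A / t ^ 3 + 1 + Λ * t ^ 2)) *
              (A / t ^ 2) / t := by gcongr
        _ = (4 * Real.pi * A / t ^ 2 + 8 * Real.pi * A ^ 2 / t ^ 5 + A / t ^ 2 + Λ * A) * A / t ^ 4 := by
            field_simp; ring
        _ ≤ C / t ^ 4 := by
            gcongr ?_ / t ^ 4
            have hS : 4 * Real.pi * A / t ^ 2 + 8 * Real.pi * A ^ 2 / t ^ 5 + A / t ^ 2 + Λ * A ≤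
                4 * Real.pi * A + 4 * Real.pi * A / t₀ ^ 2 + 8 * Real.pi * A ^ 2 / t₀ ^ 3
                  + 8 * Real.pi * A ^ 2 / t₀ ^ 5 + A / t₀ ^ 2 + Λ * A := by
              have e1 : (0:ℝ) ≤ 4 * Real.pi * A := by positivity
              have e2 : (0:ℝ) ≤ 8 * Real.pi * A ^ 2 / t₀ ^ 3 := by positivity
              linarith [c2, c2', c5]
            calc (4 * Real.pi * A / t ^ 2 + 8 * Real.pi * A ^ 2 / t ^ 5 + A / t ^ 2 + Λ * A) * A
                ≤ (4 * Real.pi * A + 4 * Real.pi * A / t₀ ^ 2 + 8 * Real.pi * A ^ 2 / t₀ ^ 3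
                  + 8 * Real.pi * A ^ 2 / t₀ ^ 5 + A / t₀ ^ 2 + Λ * A) * A := by
                  exact mul_le_mul_of_nonneg_right hS hA.le
              _ = C := by rw [hCdef]; ring
  refine ⟨C, hC0, hbound, ?_⟩
  -- Part 3: integration in time
  intro t r ht
  have ht0 : (0:ℝ) < t := lt_of_lt_of_le ht₀ ht
  -- derivative facts
  have hderaux : ∀ s : ℝ, t₀ ≤ s → HasDerivAt (fun x : ℝ => C / 3 * (x ^ 3)⁻¹) (-(C / s ^ 4)) s := by
    intro s hs
    have hs0 : (0:ℝ) < s := lt_of_lt_of_le ht₀ hs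
    have h1 : HasDerivAt (fun x : ℝ => (x ^ 3)⁻¹)
        (-(((3:ℕ) : ℝ) * s ^ 2) / (s ^ 3) ^ 2) s :=
      (hasDerivAt_pow 3 s).inv (pow_ne_zero 3 hs0.ne')
    have h2 := h1.const_mul (C / 3)
    refine HasDerivAt.congr_deriv h2 ?_
    field_simp
    ring
  have hφ : ∀ s : ℝ, t₀ ≤ s →
      HasDerivAt (fun x : ℝ => lamr x r + C / 3 * (x ^ 3)⁻¹) (lamtr s r - C / s ^ 4) s := by
    intro s hs
    simpa [sub_eq_add_neg] using (hdlamrt s r hs).fun_add (hderaux s hs)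
  have hψ : ∀ s : ℝ, t₀ ≤ s →
      HasDerivAt (fun x : ℝ => lamr x r - C / 3 * (x ^ 3)⁻¹) (lamtr s r + C / s ^ 4) s := by
    intro s hs
    simpa [sub_neg_eq_add] using (hdlamrt s r hs).fun_sub (hderaux s hs)
  have hanti : AntitoneOn (fun x : ℝ => lamr x r + C / 3 * (x ^ 3)⁻¹) (Set.Ici t₀) := by
    apply antitoneOn_of_deriv_nonpos (convex_Ici t₀)
    · intro s hs
      exact (hφ s hs).continuousAt.continuousWithinAt
    · intro s hs
      rw [interior_Ici] at hs
      exact (hφ s (le_of_lt hs)).differentiableAt.differentiableWithinAt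
    · intro s hs
      rw [interior_Ici] at hs
      rw [(hφ s (le_of_lt hs)).deriv]
      have := abs_le.mp (hbound s r (le_of_lt hs)).1
      linarith [this.2]
  have hmono : MonotoneOn (fun x : ℝ => lamr x r - C / 3 * (x ^ 3)⁻¹) (Set.Ici t₀) := by
    apply monotoneOn_of_deriv_nonneg (convex_Ici t₀)
    · intro s hs
      exact (hψ s hs).continuousAt.continuousWithinAt
    · intro s hs
      rw [interior_Ici] at hs
      exact (hψ s (le_of_lt hs)).differentiableAt.differentiableWithinAt
    · intro s hs
      rw [interior_Ici] at hs
      rw [(hψ s (le_of_lt hs)).deriv]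
      have := abs_le.mp (hbound s r (le_of_lt hs)).1
      linarith [this.1]
  have h1 := hanti (Set.self_mem_Ici) (Set.mem_Ici.mpr ht) ht
  have h2 := hmono (Set.self_mem_Ici) (Set.mem_Ici.mpr ht) ht
  simp only at h1 h2
  have e0 : C / 3 * (t₀ ^ 3)⁻¹ = C / 3 / t₀ ^ 3 := by ring
  have e0' : (0:ℝ) ≤ C / 3 * (t ^ 3)⁻¹ := by positivity
  have hu := le_abs_self (lamr t₀ r)
  have hl := neg_abs_le (lamr t₀ r)
  rw [abs_le]
  constructor
  · linarith [h1, e0', hu, e0]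
  · linarith [h2, e0', hl, e0]
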